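/- (Lemma 1, matrix form.) Let n, r ≥ 2, p, q ≥ 1, and m = n + r − 2. Let E ∈ ℝ^{n×n}, Ê ∈ ℝ^{r×r} be diagonal positive definite; let L ∈ ℝ^{n×n}, L̂ ∈ ℝ^{r×r} satisfy L1_n = 0, 1_nᵀL = 0, L̂1_r = 0, 1_rᵀL̂ = 0; let F ∈ ℝ^{n×p}, H ∈ ℝ^{q×n}; let Π ∈ ℝ^{n×r} satisfy Π1_r = 1_n, and set F̂ = ΠᵀF, Ĥ = HΠ. Suppose α, β ∈ ℝ satisfy αβ = trace(Ê)/trace(E). Define A_e = blockdiag(−E^{−1}L, −Ê^{−1}L̂), B_e = [E^{−1}F ; βÊ^{−1}F̂], C_e = [H , −αĤ], and, with Sₙ, Sₙᴸ, S_r, S_rᴸ as in the paper, Ā_e = blockdiag(−SₙᴸLE^{−1}Sₙ, −S_rᴸL̂Ê^{−1}S_r), B̄_e = [SₙᴸF ; βS_rᴸF̂], C̄_e = [HE^{−1}Sₙ , −αĤÊ^{−1}S_r]. Then for every complex s with s ≠ 0 and sI_m − Ā_e invertible, C_e (sI_{n+r} − A_e)^{−1} B_e = C̄_e (sI_m − Ā_e)^{−1}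 B̄_e; that is, the pole of the error transfer function at s = 0 cancels. -/

import Mathlib

open Matrix

/-- The all-ones column vector of length `k`, as a `k × 1` matrix. -/
def onesCol (k : ℕ) : Matrix (Fin k) (Fin 1) ℝ := Matrix.of fun _ _ => 1

/-- The matrix `Sₙ = [−I_{n−1}; 1_{n−1}ᵀ] ∈ ℝ^{n×(n−1)}`, with `n = m + 1`. -/
def Sn (m : ℕ) : Matrix (Fin (m + 1)) (Fin m) ℝ :=
  Matrix.of fun i j => if (i : ℕ) = m then 1 else if (i : ℕ) = (j : ℕ) then -1 else 0

/-- The weighted left inverse `Sₙᴸ = (Sₙᵀ E⁻¹ Sₙ)⁻¹ Sₙᵀ E⁻¹`. -/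
noncomputable def SnL (m : ℕ) (E : Matrix (Fin (m + 1)) (Fin (m + 1)) ℝ) :
    Matrix (Fin m) (Fin (m + 1)) ℝ :=
  ((Sn m)ᵀ * E⁻¹ * Sn m)⁻¹ * (Sn m)ᵀ * E⁻¹

/-- Entrywise complexification of a real matrix. -/
def cmap {α β : Type*} (A : Matrix α β ℝ) : Matrix α β ℂ := A.map fun x => (x : ℂ)

lemma ones_mul_Sn (k : ℕ) : (onesCol (k+1))ᵀ * Sn k = 0 := by
  ext i j
  have hx : ∀ x : Fin k, ((x:ℕ) = k) = False := fun x => by simp [Nat.ne_of_lt x.isLt]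
  simp only [Matrix.mul_apply, onesCol, Sn, transpose_apply, Matrix.of_apply, one_mul,
    Matrix.zero_apply]
  rw [Fin.sum_univ_castSucc]
  simp [hx, ← Fin.ext_iff]

lemma SnT_mul_ones (k : ℕ) : (Sn k)ᵀ * onesCol (k+1) = 0 := by
  have := congrArg Matrix.transpose (ones_mul_Sn k)
  simpa [Matrix.transpose_mul] using this

lemma Sn_mulVec_ne_zero (k : ℕ) {x : Fin k → ℝ} (hx : x ≠ 0) : Sn k *ᵥ x ≠ 0 := by
  intro h
  apply hx
  funext j
  have hj := congrFun h (Fin.castSucc j)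
  simp only [mulVec, dotProduct, Sn, Matrix.of_apply, Pi.zero_apply, Fin.coe_castSucc] at hj
  have hb : ∀ b : Fin k, b ∈ Finset.univ → b ≠ j →
      (if (j:ℕ) = k then 1 else if (j:ℕ) = (b:ℕ) then -1 else (0:ℝ)) * x b = 0 := by
    intro b _ hbj
    have : ((j:ℕ) = (b:ℕ)) = False := by
      simp only [eq_iff_iff, iff_false]
      exact fun hc => hbj (Fin.ext hc.symm)
    simp [Nat.ne_of_lt j.isLt, this]
  rw [Finset.sum_eq_single j hb (by simp)] at hj
  simp [Nat.ne_of_lt j.isLt] at hj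
  simpa using hj

lemma G_posDef {k : ℕ} {E : Matrix (Fin (k+1)) (Fin (k+1)) ℝ} (hEpd : E.PosDef) :
    ((Sn k)ᵀ * E⁻¹ * Sn k).PosDef := by
  have hEinv := hEpd.inv
  refine PosDef.of_dotProduct_mulVec_pos ?_ ?_
  · show _ᴴ = _
    have h1 : (E⁻¹)ᵀ = E⁻¹ := by
      rw [← conjTranspose_eq_transpose_of_trivial]; exact hEinv.1
    rw [Matrix.conjTranspose_mul, Matrix.conjTranspose_mul,
      conjTranspose_eq_transpose_of_trivial, conjTranspose_eq_transpose_of_trivial,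
      conjTranspose_eq_transpose_of_trivial, Matrix.transpose_transpose, h1,
      ← Matrix.mul_assoc]
  · intro x hx
    have key : star x ⬝ᵥ ((Sn k)ᵀ * E⁻¹ * Sn k) *ᵥ x
        = star (Sn k *ᵥ x) ⬝ᵥ E⁻¹ *ᵥ (Sn k *ᵥ x) := by
      rw [← Matrix.mulVec_mulVec, ← Matrix.mulVec_mulVec, Matrix.dotProduct_mulVec,
        Matrix.vecMul_transpose]
      simp [star_trivial]
    rw [key]
    exact hEinv.dotProduct_mulVec_pos (Sn_mulVec_ne_zero k hx)

lemma diag_pos {k : ℕ} {E : Matrix (Fin k) (Fin k) ℝ} (hEpd : E.PosDef) (c : Fin k) :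
    0 < E c c := by
  have := hEpd.dotProduct_mulVec_pos (x := Pi.single c 1) (by simp [Function.ne_iff])
  simpa [dotProduct, mulVec, Pi.single_apply] using this

lemma trace_pos' {k : ℕ} {E : Matrix (Fin (k+1)) (Fin (k+1)) ℝ} (hEpd : E.PosDef) :
    0 < E.trace := by
  exact Finset.sum_pos (fun c _ => diag_pos hEpd c) Finset.univ_nonempty

lemma SnL_mul_Sn {k : ℕ} {E : Matrix (Fin (k+1)) (Fin (k+1)) ℝ} (hEpd : E.PosDef) :
    SnL k E * Sn k = 1 := by
  have hG := G_posDef (E := E) (k := k) hEpd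
  have : SnL k E * Sn k = ((Sn k)ᵀ * E⁻¹ * Sn k)⁻¹ * ((Sn k)ᵀ * E⁻¹ * Sn k) := by
    rw [SnL]; rw [Matrix.mul_assoc, Matrix.mul_assoc, Matrix.mul_assoc]
  rw [this, Matrix.nonsing_inv_mul _ (isUnit_iff_ne_zero.mpr hG.det_pos.ne')]

lemma SnL_mul_E {k : ℕ} {E : Matrix (Fin (k+1)) (Fin (k+1)) ℝ} (hEpd : E.PosDef) :
    SnL k E * E = ((Sn k)ᵀ * E⁻¹ * Sn k)⁻¹ * (Sn k)ᵀ := by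
  rw [SnL, Matrix.mul_assoc, Matrix.nonsing_inv_mul _
    (isUnit_iff_ne_zero.mpr hEpd.det_pos.ne'), Matrix.mul_one]

lemma span_lemma {k : ℕ} {E : Matrix (Fin (k+1)) (Fin (k+1)) ℝ} (hEdiag : E.IsDiag)
    (hEpd : E.PosDef) {ι : Type*} (Q : Matrix ι (Fin (k+1)) ℝ)
    (h1 : Q * Sn k = 0) (h2 : Q * (E * onesCol (k+1)) = 0) : Q = 0 := by
  ext i j
  have hrow : ∀ l : Fin k, Q i (Fin.castSucc l) = Q i (Fin.last k) := by
    intro l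
    have hl := congrFun (congrFun h1 i) l
    simp only [Matrix.mul_apply, Sn, Matrix.of_apply, Matrix.zero_apply] at hl
    rw [Fin.sum_univ_castSucc] at hl
    have hx : ∀ x : Fin k, (((x : ℕ)) = k) = False := fun x => by
      simp [Nat.ne_of_lt x.isLt]
    simp only [Fin.coe_castSucc, hx, if_false, Fin.val_last, if_true, ← Fin.ext_iff,
      mul_ite, mul_neg_one, mul_zero, mul_one, eq_self_iff_true] at hl
    rw [Finset.sum_ite_eq' Finset.univ l (fun x => -Q i (Fin.castSucc x))] at hl
    simp at hl
    linarith
  have hconst : ∀ c : Fin (k+1), Q i c = Q i (Fin.last k) := by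
    intro c
    induction c using Fin.lastCases with
    | last => rfl
    | cast l => exact hrow l
  have h2' := congrFun (congrFun h2 i) 0
  simp only [Matrix.mul_apply, Matrix.zero_apply] at h2'
  have hinner : ∀ c : Fin (k+1), (∑ d : Fin (k+1), E c d * onesCol (k+1) d 0) = E c c := by
    intro c
    simp only [onesCol, Matrix.of_apply, mul_one]
    exact Finset.sum_eq_single c (fun b _ hb => hEdiag (Ne.symm hb)) (by simp)
  rw [Finset.sum_congr rfl (fun c _ => by rw [hinner c, hconst c])] at h2'
  rw [← Finset.mul_sum] at h2'
  have htr : (∑ c : Fin (k+1), E c c) ≠ 0 := by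
    have := (trace_pos' hEpd).ne'
    simpa [Matrix.trace, Matrix.diag] using this
  have hlast : Q i (Fin.last k) = 0 := by
    rcases mul_eq_zero.mp h2' with h | h
    · exact h
    · exact absurd h htr
  simp [hconst j, hlast]

lemma ones_E_ones {k : ℕ} {E : Matrix (Fin (k+1)) (Fin (k+1)) ℝ} (hEdiag : E.IsDiag) :
    (onesCol (k+1))ᵀ * (E * onesCol (k+1)) = E.trace • (1 : Matrix (Fin 1) (Fin 1) ℝ) := by
  ext i j
  fin_cases i; fin_cases j
  simp only [Matrix.mul_apply, onesCol, Matrix.of_apply, transpose_apply, one_mul, mul_one,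
    Matrix.smul_apply, Matrix.one_apply_eq, smul_eq_mul, Matrix.trace, Matrix.diag]
  exact Finset.sum_congr rfl fun c _ =>
    Finset.sum_eq_single c (fun b _ hb => hEdiag (Ne.symm hb)) (by simp)

lemma proj {k : ℕ} {E : Matrix (Fin (k+1)) (Fin (k+1)) ℝ} (hEdiag : E.IsDiag)
    (hEpd : E.PosDef) :
    Sn k * SnL k E + (E.trace)⁻¹ • (E * (onesCol (k+1) * (onesCol (k+1))ᵀ)) = 1 := by
  apply sub_eq_zero.mp
  apply span_lemma hEdiag hEpd
  · have h1 : (Sn k * SnL k E) * Sn k = Sn k := by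
      rw [Matrix.mul_assoc, SnL_mul_Sn hEpd, Matrix.mul_one]
    have h2 : (E * (onesCol (k+1) * (onesCol (k+1))ᵀ)) * Sn k = 0 := by
      rw [Matrix.mul_assoc, Matrix.mul_assoc, ones_mul_Sn, Matrix.mul_zero, Matrix.mul_zero]
    rw [Matrix.sub_mul, Matrix.add_mul, Matrix.smul_mul, h1, h2, Matrix.one_mul]
    simp
  · have h1 : (Sn k * SnL k E) * (E * onesCol (k+1)) = 0 := by
      rw [Matrix.mul_assoc, ← Matrix.mul_assoc (SnL k E), SnL_mul_E hEpd, Matrix.mul_assoc,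
        SnT_mul_ones, Matrix.mul_zero, Matrix.mul_zero]
    have h2 : (E * (onesCol (k+1) * (onesCol (k+1))ᵀ)) * (E * onesCol (k+1))
        = E.trace • (E * onesCol (k+1)) := by
      rw [Matrix.mul_assoc, Matrix.mul_assoc, ones_E_ones hEdiag, Matrix.mul_smul,
        Matrix.mul_one, Matrix.mul_smul]
    rw [Matrix.sub_mul, Matrix.add_mul, Matrix.smul_mul, h1, h2, Matrix.one_mul, smul_smul,
      inv_mul_cancel₀ (trace_pos' hEpd).ne']
    simp

lemma cmap_mul {α β γ : Type*} [Fintype β] (A : Matrix α β ℝ) (B : Matrix β γ ℝ) :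
    cmap (A * B) = cmap A * cmap B :=
  Matrix.map_mul (f := Complex.ofRealHom)

lemma cmap_one {α : Type*} [DecidableEq α] [Fintype α] : cmap (1 : Matrix α α ℝ) = 1 :=
  Matrix.map_one _ Complex.ofReal_zero Complex.ofReal_one

lemma cmap_zero {α β : Type*} : cmap (0 : Matrix α β ℝ) = 0 := by
  ext i j; simp [cmap]

lemma cmap_neg {α β : Type*} (A : Matrix α β ℝ) : cmap (-A) = -cmap A := by
  ext i j; simp [cmap]

lemma cmap_add {α β : Type*} (A B : Matrix α β ℝ) : cmap (A + B) = cmap A + cmap B := by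
  ext i j; simp [cmap]

lemma cmap_smul {α β : Type*} (r : ℝ) (A : Matrix α β ℝ) : cmap (r • A) = (r:ℂ) • cmap A := by
  ext i j; simp [cmap]

section Key
variable {k : ℕ} {E L : Matrix (Fin (k+1)) (Fin (k+1)) ℝ}

lemma E_mul_Einv (hEpd : E.PosDef) : E * E⁻¹ = 1 :=
  Matrix.mul_nonsing_inv _ (isUnit_iff_ne_zero.mpr hEpd.det_pos.ne')

lemma Einv_mul_E (hEpd : E.PosDef) : E⁻¹ * E = 1 :=
  Matrix.nonsing_inv_mul _ (isUnit_iff_ne_zero.mpr hEpd.det_pos.ne')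

lemma SnSnL_L (hEdiag : E.IsDiag) (hEpd : E.PosDef)
    (h1L : (onesCol (k+1))ᵀ * L = 0) : Sn k * (SnL k E * L) = L := by
  have hp := proj hEdiag hEpd
  have h : Sn k * SnL k E = 1 - (E.trace)⁻¹ • (E * (onesCol (k+1) * (onesCol (k+1))ᵀ)) := by
    rw [eq_sub_iff_add_eq]; exact hp
  rw [← Matrix.mul_assoc, h, Matrix.sub_mul, Matrix.one_mul, Matrix.smul_mul]
  have : E * (onesCol (k+1) * (onesCol (k+1))ᵀ) * L = 0 := by
    rw [Matrix.mul_assoc, Matrix.mul_assoc, h1L, Matrix.mul_zero, Matrix.mul_zero]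
  rw [this, smul_zero, sub_zero]

lemma proj2 (hEdiag : E.IsDiag) (hEpd : E.PosDef) :
    E⁻¹ * (Sn k * (SnL k E * E)) + (E.trace)⁻¹ • (onesCol (k+1) * (onesCol (k+1))ᵀ * E) = 1 := by
  have hp := congrArg (fun X => E⁻¹ * (X * E)) (proj hEdiag hEpd)
  simp only [Matrix.add_mul, Matrix.mul_add, Matrix.one_mul, Matrix.smul_mul, Matrix.mul_smul]
    at hp
  rw [Einv_mul_E hEpd] at hp
  rw [Matrix.mul_assoc (Sn k)] at hp
  rw [show E⁻¹ * (E * (onesCol (k+1) * (onesCol (k+1))ᵀ) * E)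
      = onesCol (k+1) * (onesCol (k+1))ᵀ * E from by
    rw [← Matrix.mul_assoc, ← Matrix.mul_assoc, Einv_mul_E hEpd, Matrix.one_mul]] at hp
  exact hp

lemma key_rinv (hEdiag : E.IsDiag) (hEpd : E.PosDef)
    (hL1 : L * onesCol (k+1) = 0) (h1L : (onesCol (k+1))ᵀ * L = 0)
    {s : ℂ} (hs : s ≠ 0)
    (hM : IsUnit (s • (1 : Matrix (Fin k) (Fin k) ℂ) - cmap (-(SnL k E * L * E⁻¹ * Sn k)))) :
    (s • (1 : Matrix (Fin (k+1)) (Fin (k+1)) ℂ) - cmap (-(E⁻¹ * L))) *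
      (s⁻¹ • (((E.trace : ℝ) : ℂ))⁻¹ • cmap (onesCol (k+1) * (onesCol (k+1))ᵀ * E)
        + cmap (E⁻¹ * Sn k) *
          (s • (1 : Matrix (Fin k) (Fin k) ℂ) - cmap (-(SnL k E * L * E⁻¹ * Sn k)))⁻¹ *
          cmap (SnL k E * E)) = 1 := by
  have hMdet : IsUnit (s • (1 : Matrix (Fin k) (Fin k) ℂ)
      - cmap (-(SnL k E * L * E⁻¹ * Sn k))).det := (Matrix.isUnit_iff_isUnit_det _).mp hM
  rw [cmap_neg, sub_neg_eq_add, cmap_neg, sub_neg_eq_add]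
  set Mc := s • (1 : Matrix (Fin k) (Fin k) ℂ) + cmap (SnL k E * L * E⁻¹ * Sn k) with hMc
  have hMcinv : Mc * Mc⁻¹ = 1 := by
    apply Matrix.mul_nonsing_inv
    rwa [cmap_neg, sub_neg_eq_add] at hMdet
  set T1 : Matrix (Fin (k+1)) (Fin (k+1)) ℂ :=
    s⁻¹ • (((E.trace : ℝ) : ℂ))⁻¹ • cmap (onesCol (k+1) * (onesCol (k+1))ᵀ * E) with hT1
  -- first piece
  have h1 : (s • (1 : Matrix (Fin (k+1)) (Fin (k+1)) ℂ) + cmap (E⁻¹ * L)) * T1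
      = (((E.trace : ℝ) : ℂ))⁻¹ • cmap (onesCol (k+1) * (onesCol (k+1))ᵀ * E) := by
    have hz : cmap (E⁻¹ * L) * cmap (onesCol (k+1) * (onesCol (k+1))ᵀ * E) = 0 := by
      rw [← cmap_mul]
      have : (E⁻¹ * L) * (onesCol (k+1) * (onesCol (k+1))ᵀ * E) = 0 := by
        rw [Matrix.mul_assoc E⁻¹, Matrix.mul_assoc (onesCol (k+1)), ← Matrix.mul_assoc L,
          hL1, Matrix.zero_mul, Matrix.mul_zero]
      rw [this, cmap_zero]
    rw [hT1]
    simp only [Matrix.add_mul, Matrix.mul_smul, Matrix.smul_mul, Matrix.one_mul, hz,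
      smul_zero, add_zero, smul_smul]
    rw [mul_comm, ← mul_assoc, mul_inv_cancel₀ hs, one_mul]
  -- commutation piece
  have hcomm : (s • (1 : Matrix (Fin (k+1)) (Fin (k+1)) ℂ) + cmap (E⁻¹ * L)) * cmap (E⁻¹ * Sn k)
      = cmap (E⁻¹ * Sn k) * Mc := by
    have hreal : (E⁻¹ * L) * (E⁻¹ * Sn k) = (E⁻¹ * Sn k) * (SnL k E * L * E⁻¹ * Sn k) := by
      conv_lhs => rw [← SnSnL_L hEdiag hEpd h1L]
      simp only [Matrix.mul_assoc]
    rw [hMc, Matrix.add_mul, Matrix.mul_add, Matrix.smul_mul, Matrix.one_mul,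
      Matrix.mul_smul, Matrix.mul_one, ← cmap_mul, ← cmap_mul, hreal]
  -- assemble
  rw [Matrix.mul_add, h1]
  have h2 : (s • (1 : Matrix (Fin (k+1)) (Fin (k+1)) ℂ) + cmap (E⁻¹ * L)) *
      (cmap (E⁻¹ * Sn k) * Mc⁻¹ * cmap (SnL k E * E))
      = cmap (E⁻¹ * (Sn k * (SnL k E * E))) := by
    rw [← Matrix.mul_assoc, ← Matrix.mul_assoc, hcomm, Matrix.mul_assoc (cmap (E⁻¹ * Sn k)),
      hMcinv, Matrix.mul_one, ← cmap_mul]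
    congr 1
    simp only [Matrix.mul_assoc]
  rw [h2]
  have := congrArg cmap (proj2 (E := E) hEdiag hEpd)
  rw [cmap_add, cmap_smul, cmap_one, Complex.ofReal_inv] at this
  exact (add_comm _ _).trans this

lemma key_isUnit (hEdiag : E.IsDiag) (hEpd : E.PosDef)
    (hL1 : L * onesCol (k+1) = 0) (h1L : (onesCol (k+1))ᵀ * L = 0)
    {s : ℂ} (hs : s ≠ 0)
    (hM : IsUnit (s • (1 : Matrix (Fin k) (Fin k) ℂ) - cmap (-(SnL k E * L * E⁻¹ * Sn k)))) :
    IsUnit (s • (1 : Matrix (Fin (k+1)) (Fin (k+1)) ℂ) - cmap (-(E⁻¹ * L))) := by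
  have h := key_rinv hEdiag hEpd hL1 h1L hs hM
  have hd := congrArg Matrix.det h
  rw [Matrix.det_mul, Matrix.det_one] at hd
  exact (Matrix.isUnit_iff_isUnit_det _).mpr (IsUnit.of_mul_eq_one _ hd)

lemma key_inv (hEdiag : E.IsDiag) (hEpd : E.PosDef)
    (hL1 : L * onesCol (k+1) = 0) (h1L : (onesCol (k+1))ᵀ * L = 0)
    {s : ℂ} (hs : s ≠ 0)
    (hM : IsUnit (s • (1 : Matrix (Fin k) (Fin k) ℂ) - cmap (-(SnL k E * L * E⁻¹ * Sn k)))) :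
    (s • (1 : Matrix (Fin (k+1)) (Fin (k+1)) ℂ) - cmap (-(E⁻¹ * L)))⁻¹
      = s⁻¹ • (((E.trace : ℝ) : ℂ))⁻¹ • cmap (onesCol (k+1) * (onesCol (k+1))ᵀ * E)
        + cmap (E⁻¹ * Sn k) *
          (s • (1 : Matrix (Fin k) (Fin k) ℂ) - cmap (-(SnL k E * L * E⁻¹ * Sn k)))⁻¹ *
          cmap (SnL k E * E) :=
  Matrix.inv_eq_right_inv (key_rinv hEdiag hEpd hL1 h1L hs hM)

lemma key_tf {p q : ℕ} (hEdiag : E.IsDiag) (hEpd : E.PosDef)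
    (hL1 : L * onesCol (k+1) = 0) (h1L : (onesCol (k+1))ᵀ * L = 0)
    (F : Matrix (Fin (k+1)) (Fin p) ℝ) (H : Matrix (Fin q) (Fin (k+1)) ℝ)
    {s : ℂ} (hs : s ≠ 0)
    (hM : IsUnit (s • (1 : Matrix (Fin k) (Fin k) ℂ) - cmap (-(SnL k E * L * E⁻¹ * Sn k)))) :
    cmap H * (s • (1 : Matrix (Fin (k+1)) (Fin (k+1)) ℂ) - cmap (-(E⁻¹ * L)))⁻¹ *
        cmap (E⁻¹ * F)
      = s⁻¹ • (((E.trace : ℝ) : ℂ))⁻¹ • cmap (H * (onesCol (k+1) * (onesCol (k+1))ᵀ) * F)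
        + cmap (H * E⁻¹ * Sn k) *
          (s • (1 : Matrix (Fin k) (Fin k) ℂ) - cmap (-(SnL k E * L * E⁻¹ * Sn k)))⁻¹ *
          cmap (SnL k E * F) := by
  rw [key_inv hEdiag hEpd hL1 h1L hs hM, Matrix.mul_add, Matrix.add_mul]
  congr 1
  · rw [Matrix.mul_smul, Matrix.mul_smul, Matrix.smul_mul, Matrix.smul_mul, ← cmap_mul,
      ← cmap_mul]
    congr 2
    simp only [Matrix.mul_assoc]
    rw [← Matrix.mul_assoc E E⁻¹ F, E_mul_Einv hEpd, Matrix.one_mul]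
  · have hr : SnL k E * E * (E⁻¹ * F) = SnL k E * F := by
      rw [Matrix.mul_assoc, ← Matrix.mul_assoc E, E_mul_Einv hEpd, Matrix.one_mul]
    calc cmap H * (cmap (E⁻¹ * Sn k) *
          (s • (1 : Matrix (Fin k) (Fin k) ℂ) - cmap (-(SnL k E * L * E⁻¹ * Sn k)))⁻¹ *
          cmap (SnL k E * E)) * cmap (E⁻¹ * F)
        = (cmap H * cmap (E⁻¹ * Sn k)) *
          (s • (1 : Matrix (Fin k) (Fin k) ℂ) - cmap (-(SnL k E * L * E⁻¹ * Sn k)))⁻¹ *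
          (cmap (SnL k E * E) * cmap (E⁻¹ * F)) := by simp only [Matrix.mul_assoc]
      _ = _ := by rw [← cmap_mul, ← cmap_mul, hr, ← Matrix.mul_assoc H]

end Key

section Blocks
variable {m n : Type*} [Fintype m] [Fintype n] [DecidableEq m] [DecidableEq n]

lemma cmap_fromBlocks {o l : Type*} (A : Matrix m o ℝ) (B : Matrix m l ℝ)
    (C : Matrix n o ℝ) (D : Matrix n l ℝ) :
    cmap (fromBlocks A B C D) = fromBlocks (cmap A) (cmap B) (cmap C) (cmap D) :=
  Matrix.fromBlocks_map A B C D _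

lemma cmap_fromRows {o : Type*} (A : Matrix m o ℝ) (B : Matrix n o ℝ) :
    cmap (fromRows A B) = fromRows (cmap A) (cmap B) := by
  ext i j; cases i <;> rfl

lemma cmap_fromCols {o : Type*} (A : Matrix o m ℝ) (B : Matrix o n ℝ) :
    cmap (fromCols A B) = fromCols (cmap A) (cmap B) := by
  ext i j; cases j <;> rfl

lemma smul_one_sub_fromBlocks (s : ℂ) (A : Matrix m m ℂ) (D : Matrix n n ℂ) :
    s • (1 : Matrix (m ⊕ n) (m ⊕ n) ℂ) - fromBlocks A 0 0 D
      = fromBlocks (s • 1 - A) 0 0 (s • 1 - D) := by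
  rw [← fromBlocks_one, fromBlocks_smul, sub_eq_add_neg, fromBlocks_neg, fromBlocks_add]
  simp [sub_eq_add_neg]

lemma isUnit_fromBlocks_diag {A : Matrix m m ℂ} {D : Matrix n n ℂ}
    (h : IsUnit (fromBlocks A 0 0 D)) : IsUnit A ∧ IsUnit D := by
  have hd := (Matrix.isUnit_iff_isUnit_det _).mp h
  rw [Matrix.det_fromBlocks_zero₂₁] at hd
  exact ⟨(Matrix.isUnit_iff_isUnit_det _).mpr (isUnit_of_mul_isUnit_left hd),
    (Matrix.isUnit_iff_isUnit_det _).mpr (isUnit_of_mul_isUnit_right hd)⟩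

lemma fromBlocks_diag_inv {A : Matrix m m ℂ} {D : Matrix n n ℂ}
    (hA : IsUnit A) (hD : IsUnit D) :
    (fromBlocks A 0 0 D)⁻¹ = fromBlocks A⁻¹ 0 0 D⁻¹ := by
  apply Matrix.inv_eq_right_inv
  rw [fromBlocks_multiply]
  simp [Matrix.mul_nonsing_inv _ ((Matrix.isUnit_iff_isUnit_det _).mp hA),
    Matrix.mul_nonsing_inv _ ((Matrix.isUnit_iff_isUnit_det _).mp hD), fromBlocks_one]

end Blocks


/-- Lemma 1, matrix form: if `αβ = trace(Ê)/trace(E)` then for every `s ≠ 0`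
with `sI − Ā_e` invertible,
`C_e (sI − A_e)⁻¹ B_e = C̄_e (sI − Ā_e)⁻¹ B̄_e`: the pole of the error transfer
function at `s = 0` cancels. Here `n = a+1`, `r = b+1`, `F̂ = Pᵀ F`, `Ĥ = H P`. -/
theorem error_transfer_function_pole_cancellation (a b p q : ℕ)
    (ha : 1 ≤ a) (hb : 1 ≤ b) (hp : 1 ≤ p) (hq : 1 ≤ q)
    (E : Matrix (Fin (a + 1)) (Fin (a + 1)) ℝ) (hEdiag : E.IsDiag) (hEpd : E.PosDef)
    (Eh : Matrix (Fin (b + 1)) (Fin (b + 1)) ℝ) (hEhdiag : Eh.IsDiag) (hEhpd : Eh.PosDef)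
    (L : Matrix (Fin (a + 1)) (Fin (a + 1)) ℝ)
    (hL1 : L * onesCol (a + 1) = 0) (h1L : (onesCol (a + 1))ᵀ * L = 0)
    (Lh : Matrix (Fin (b + 1)) (Fin (b + 1)) ℝ)
    (hLh1 : Lh * onesCol (b + 1) = 0) (h1Lh : (onesCol (b + 1))ᵀ * Lh = 0)
    (F : Matrix (Fin (a + 1)) (Fin p) ℝ) (H : Matrix (Fin q) (Fin (a + 1)) ℝ)
    (P : Matrix (Fin (a + 1)) (Fin (b + 1)) ℝ)
    (hP : P * onesCol (b + 1) = onesCol (a + 1))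
    (al be : ℝ) (hab : al * be = Eh.trace / E.trace)
    (s : ℂ) (hs : s ≠ 0)
    (hinv : IsUnit (s • (1 : Matrix (Fin a ⊕ Fin b) (Fin a ⊕ Fin b) ℂ) -
      cmap (fromBlocks (-(SnL a E * L * E⁻¹ * Sn a)) 0 0 (-(SnL b Eh * Lh * Eh⁻¹ * Sn b))))) :
    cmap (fromCols H ((-al) • (H * P))) *
        (s • (1 : Matrix (Fin (a + 1) ⊕ Fin (b + 1)) (Fin (a + 1) ⊕ Fin (b + 1)) ℂ) -
          cmap (fromBlocks (-(E⁻¹ * L)) 0 0 (-(Eh⁻¹ * Lh))))⁻¹ *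
        cmap (fromRows (E⁻¹ * F) (be • (Eh⁻¹ * (Pᵀ * F)))) =
      cmap (fromCols (H * E⁻¹ * Sn a) ((-al) • ((H * P) * Eh⁻¹ * Sn b))) *
        (s • (1 : Matrix (Fin a ⊕ Fin b) (Fin a ⊕ Fin b) ℂ) -
          cmap (fromBlocks (-(SnL a E * L * E⁻¹ * Sn a)) 0 0
            (-(SnL b Eh * Lh * Eh⁻¹ * Sn b))))⁻¹ *
        cmap (fromRows (SnL a E * F) (be • (SnL b Eh * (Pᵀ * F)))) := by
  -- split the reduced-order resolvent into blocks
  have hsplitM : (s • (1 : Matrix (Fin a ⊕ Fin b) (Fin a ⊕ Fin b) ℂ) -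
      cmap (fromBlocks (-(SnL a E * L * E⁻¹ * Sn a)) 0 0 (-(SnL b Eh * Lh * Eh⁻¹ * Sn b))))
      = fromBlocks (s • 1 - cmap (-(SnL a E * L * E⁻¹ * Sn a))) 0 0
          (s • 1 - cmap (-(SnL b Eh * Lh * Eh⁻¹ * Sn b))) := by
    rw [cmap_fromBlocks]; simp only [cmap_zero]; rw [smul_one_sub_fromBlocks]
  rw [hsplitM] at hinv
  obtain ⟨hM1, hM2⟩ := isUnit_fromBlocks_diag hinv
  have hA1 := key_isUnit hEdiag hEpd hL1 h1L hs hM1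
  have hA2 := key_isUnit hEhdiag hEhpd hLh1 h1Lh hs hM2
  have hsplitA : (s • (1 : Matrix (Fin (a + 1) ⊕ Fin (b + 1)) (Fin (a + 1) ⊕ Fin (b + 1)) ℂ) -
      cmap (fromBlocks (-(E⁻¹ * L)) 0 0 (-(Eh⁻¹ * Lh))))
      = fromBlocks (s • 1 - cmap (-(E⁻¹ * L))) 0 0 (s • 1 - cmap (-(Eh⁻¹ * Lh))) := by
    rw [cmap_fromBlocks]; simp only [cmap_zero]; rw [smul_one_sub_fromBlocks]
  rw [hsplitA, fromBlocks_diag_inv hA1 hA2, hsplitM, fromBlocks_diag_inv hM1 hM2,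
    cmap_fromCols, cmap_fromRows, cmap_fromCols, cmap_fromRows,
    fromCols_mul_fromBlocks, fromCols_mul_fromBlocks,
    fromCols_mul_fromRows, fromCols_mul_fromRows]
  simp only [Matrix.mul_zero, Matrix.zero_mul, add_zero, zero_add]
  -- pull out the scalars
  rw [cmap_smul, cmap_smul, cmap_smul, cmap_smul]
  simp only [Matrix.smul_mul, Matrix.mul_smul, smul_smul]
  rw [key_tf hEdiag hEpd hL1 h1L F H hs hM1,
    key_tf hEhdiag hEhpd hLh1 h1Lh (Pᵀ * F) (H * P) hs hM2]
  -- pole cancellation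
  have hPT : (onesCol (b+1))ᵀ * Pᵀ = (onesCol (a+1))ᵀ := by
    rw [← Matrix.transpose_mul, hP]
  have hpole : (H * P) * (onesCol (b+1) * (onesCol (b+1))ᵀ) * (Pᵀ * F)
      = H * (onesCol (a+1) * (onesCol (a+1))ᵀ) * F := by
    simp only [Matrix.mul_assoc]
    rw [← Matrix.mul_assoc (onesCol (b+1))ᵀ, hPT, ← Matrix.mul_assoc P, hP]
  rw [hpole]
  set Z := cmap (H * (onesCol (a+1) * (onesCol (a+1))ᵀ) * F) with hZ
  set R1 := cmap (H * E⁻¹ * Sn a) *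
      (s • (1 : Matrix (Fin a) (Fin a) ℂ) - cmap (-(SnL a E * L * E⁻¹ * Sn a)))⁻¹ *
      cmap (SnL a E * F) with hR1
  set R2 := cmap (H * P * Eh⁻¹ * Sn b) *
      (s • (1 : Matrix (Fin b) (Fin b) ℂ) - cmap (-(SnL b Eh * Lh * Eh⁻¹ * Sn b)))⁻¹ *
      cmap (SnL b Eh * (Pᵀ * F)) with hR2
  set z : ℂ := ((be : ℝ) : ℂ) * ((-al : ℝ) : ℂ) with hz
  have htrE : ((E.trace : ℝ) : ℂ) ≠ 0 := Complex.ofReal_ne_zero.mpr (trace_pos' hEpd).ne'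
  have htrEh : ((Eh.trace : ℝ) : ℂ) ≠ 0 := Complex.ofReal_ne_zero.mpr (trace_pos' hEhpd).ne'
  have habr : al * be * E.trace = Eh.trace := by
    rw [hab]; exact div_mul_cancel₀ _ (trace_pos' hEpd).ne'
  have hab' : ((al : ℝ) : ℂ) * ((be : ℝ) : ℂ) * ((E.trace : ℝ) : ℂ) = ((Eh.trace : ℝ) : ℂ) := by
    exact_mod_cast congrArg (fun r : ℝ => (r : ℂ)) habr
  have hcancel : s⁻¹ • ((E.trace : ℝ) : ℂ)⁻¹ • Z + z • (s⁻¹ • ((Eh.trace : ℝ) : ℂ)⁻¹ • Z)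
      = 0 := by
    rw [smul_smul, smul_smul, smul_smul, ← add_smul]
    convert zero_smul ℂ Z using 2
    rw [hz]
    push_cast at hab' ⊢
    field_simp
    linear_combination (-1) * hab'
  rw [smul_add]
  calc s⁻¹ • ((E.trace : ℝ) : ℂ)⁻¹ • Z + R1 + (z • (s⁻¹ • ((Eh.trace : ℝ) : ℂ)⁻¹ • Z) + z • R2)
      = (s⁻¹ • ((E.trace : ℝ) : ℂ)⁻¹ • Z + z • (s⁻¹ • ((Eh.trace : ℝ) : ℂ)⁻¹ • Z))
        + (R1 + z • R2) := by abel
    _ = R1 + z • R2 := by rw [hcancel, zero_add]
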